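/- Let m, n ≥ 2 and let f be the {0,1}-valued function on the grid G = {0,…,m−1}×{0,…,n−1} whose unique true point is X = (0, x2) with 1 ≤ x2 ≤ n−2. Set Y = (0, x2−1) and Z = (0, x2+1). Then {XY, XZ} is a proper pair of oriented prime segments defining f, and it is the unique proper pair of oriented prime segments in G defining f. -/

import Mathlib

/-- Cast an integer point to the real plane. -/
def toR (p : ℤ × ℤ) : ℝ × ℝ := ((p.1 : ℝ), (p.2 : ℝ))

/-- Signed area determinant Δ(P,Q,R). -/
def Det (P Q R : ℤ × ℤ) : ℤ :=
  (Q.1 - P.1) * (R.2 - P.2) - (Q.2 - P.2) * (R.1 - P.1)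

/-- Two integer points are adjacent: distinct, and the segment between them
contains no integer point other than the endpoints. -/
def Adjacent (A B : ℤ × ℤ) : Prop :=
  A ≠ B ∧ ∀ C : ℤ × ℤ, toR C ∈ segment ℝ (toR A) (toR B) → C = A ∨ C = B

/-- The {0,1}-valued (Bool-valued) function defined by the oriented prime
segment AB: on the line through A and B it is true iff the point is strictly
closer to A than to B; off the line it is true iff triangle A B X is
counterclockwise. -/
def fseg (A B X : ℤ × ℤ) : Bool :=
  if Det A B X = 0 then
    decide ((X.1 - A.1) ^ 2 + (X.2 - A.2) ^ 2 < (X.1 - B.1) ^ 2 + (X.2 - B.2) ^ 2)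
  else
    decide (0 < Det A B X)

/-- The grid {0,…,m−1} × {0,…,n−1} as a set of integer points. -/
def Grid (m n : ℕ) : Set (ℤ × ℤ) :=
  {p | 0 ≤ p.1 ∧ p.1 < (m : ℤ) ∧ 0 ≤ p.2 ∧ p.2 < (n : ℤ)}

/-- A pair of oriented prime segments (A,B), (C,D) is proper. -/
def ProperPair (A B C D : ℤ × ℤ) : Prop :=
  Adjacent A B ∧ Adjacent C D ∧
    fseg C D A = true ∧ fseg C D B = true ∧ fseg A B C = true ∧ fseg A B D = true

/-- f is a threshold function on the grid. -/
def IsThreshold (m n : ℕ) (f : ℤ × ℤ → Bool) : Prop :=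
  ∃ a0 a1 a2 : ℝ, ∀ p ∈ Grid m n,
    (f p = true ↔ a1 * (p.1 : ℝ) + a2 * (p.2 : ℝ) ≥ a0)

/-- f is a 2-threshold function on the grid: a conjunction of two threshold
functions. -/
def Is2Threshold (m n : ℕ) (f : ℤ × ℤ → Bool) : Prop :=
  ∃ g h : ℤ × ℤ → Bool, IsThreshold m n g ∧ IsThreshold m n h ∧
    ∀ p ∈ Grid m n, f p = (g p && h p)

-- param point lemma
lemma mem_seg (A v : ℤ × ℤ) (c d : ℤ) (hc : 1 ≤ c) (hcd : c ≤ d) :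
    toR (A + c • v) ∈ segment ℝ (toR A) (toR (A + d • v)) := by
  have hd : (0:ℝ) < (d:ℝ) := by exact_mod_cast lt_of_lt_of_le one_pos (by exact_mod_cast hc.trans hcd)
  refine ⟨1 - (c:ℝ)/d, (c:ℝ)/d, ?_, ?_, by ring, ?_⟩
  · have h1 : (c:ℝ)/d ≤ 1 := by
      rw [div_le_one hd]; exact_mod_cast hcd
    linarith
  · positivity
  · have : ((c:ℝ)/d) * d = c := by field_simp
    simp only [toR, Prod.smul_mk, Prod.mk_add_mk, smul_eq_mul, Prod.fst_add, Prod.snd_add,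
      Prod.smul_fst, Prod.smul_snd]
    refine Prod.ext_iff.mpr ⟨?_, ?_⟩ <;> push_cast
    · linear_combination (v.1:ℝ) * this
    · linear_combination (v.2:ℝ) * this

lemma adj_smul (A v : ℤ × ℤ) (d : ℤ) (hv : v ≠ 0) (hd : 1 ≤ d)
    (h : Adjacent A (A + d • v)) : d = 1 := by
  by_contra hne
  have hd2 : 2 ≤ d := by omega
  have hmem := mem_seg A v 1 d le_rfl (by omega)
  rcases h.2 (A + 1 • v) hmem with h1 | h1
  · apply hv
    have := congrArg (fun p => p - A) h1
    simpa using this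
  · apply hv
    have : (1:ℤ) • v = d • v := by
      have := congrArg (fun p => p - A) h1
      simpa [add_sub_cancel_left] using this
    have h2 : (d - 1) • v = 0 := by
      rw [sub_smul, ← this]; simp
    rcases Prod.ext_iff.mp h2 with ⟨e1, e2⟩
    simp only [Prod.smul_fst, Prod.smul_snd, smul_eq_mul, Prod.fst_zero, Prod.snd_zero] at e1 e2
    have : v.1 = 0 ∧ v.2 = 0 := by
      constructor <;> [rcases mul_eq_zero.mp e1 with h|h; rcases mul_eq_zero.mp e2 with h|h] <;> omega
    exact Prod.ext_iff.mpr this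

-- primitivity / collinearity
lemma adj_collinear (A B D : ℤ × ℤ) (h : Adjacent A B) (hdet : Det A B D = 0) :
    ∃ k : ℤ, D = A + k • (B - A) := by
  set v : ℤ × ℤ := B - A with hv
  have hvne : v ≠ 0 := by
    simp [hv, sub_eq_zero]; exact fun hh => h.1 hh.symm
  set g : ℕ := Int.gcd v.1 v.2 with hg
  have hg1 : 1 ≤ g := by
    have h1 : ¬(v.1 = 0 ∧ v.2 = 0) := fun hh => hvne (Prod.ext_iff.mpr hh)
    have := Int.gcd_pos_iff.mpr (show v.1 ≠ 0 ∨ v.2 ≠ 0 by tauto)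
    omega
  obtain ⟨w1, hw1⟩ : (g:ℤ) ∣ v.1 := Int.gcd_dvd_left v.1 v.2
  obtain ⟨w2, hw2⟩ : (g:ℤ) ∣ v.2 := Int.gcd_dvd_right v.1 v.2
  set w : ℤ × ℤ := (w1, w2) with hw
  have hvgw : v = (g:ℤ) • w := by
    apply Prod.ext_iff.mpr; simp [hw, hw1, hw2]
  have hwne : w ≠ 0 := by
    intro hh; apply hvne; rw [hvgw, hh, smul_zero]
  have hB : B = A + (g:ℤ) • w := by
    rw [← hvgw, hv]; ring
  have hgone : (g:ℤ) = 1 := adj_smul A w g hwne (by exact_mod_cast hg1) (hB ▸ h)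
  -- so v is primitive
  have hcop : IsCoprime v.1 v.2 := by
    rw [Int.isCoprime_iff_gcd_eq_one]; exact_mod_cast hgone
  -- Det A B D = v.1 * (D.2 - A.2) - v.2 * (D.1 - A.1)
  have hdet' : v.1 * (D.2 - A.2) = v.2 * (D.1 - A.1) := by
    simp only [Det, hv] at hdet ⊢
    simp only [Prod.fst_sub, Prod.snd_sub]
    linarith
  rcases em (v.1 = 0) with h0 | h0
  · -- v.2 = ±1
    have hv2 : v.2 = 1 ∨ v.2 = -1 := by
      have := hcop; rw [h0] at this
      rcases Int.isUnit_iff.mp (isCoprime_zero_left.mp this) with h|h <;> tauto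
    have hD1 : D.1 = A.1 := by
      rw [h0, zero_mul] at hdet'
      rcases hv2 with h|h <;> rw [h] at hdet' <;> omega
    refine ⟨(D.2 - A.2) * v.2, ?_⟩
    apply Prod.ext_iff.mpr
    simp only [Prod.fst_add, Prod.snd_add, Prod.smul_fst, Prod.smul_snd, smul_eq_mul,
      Prod.fst_sub, Prod.snd_sub, ← hv, h0]
    rcases hv2 with h|h <;> rw [h] <;> constructor <;> omega
  · have hdvd : v.1 ∣ D.1 - A.1 := by
      have : v.1 ∣ v.2 * (D.1 - A.1) := ⟨D.2 - A.2, by linarith [hdet']⟩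
      exact hcop.dvd_of_dvd_mul_left this
    obtain ⟨k, hk⟩ := hdvd
    refine ⟨k, ?_⟩
    apply Prod.ext_iff.mpr
    simp only [Prod.fst_add, Prod.snd_add, Prod.smul_fst, Prod.smul_snd, smul_eq_mul,
      Prod.fst_sub, Prod.snd_sub, ← hv]
    constructor
    · linarith [hk, mul_comm k v.1]
    · have h5 : v.1 * (D.2 - A.2) = v.1 * (k * v.2) := by rw [hdet', hk]; ring
      have := mul_left_cancel₀ h0 h5
      linarith

lemma adj_vert (x a b : ℤ) (h : b = a + 1 ∨ b = a - 1) : Adjacent (x, a) (x, b) := by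
  constructor
  · intro hh; rcases Prod.ext_iff.mp hh with ⟨_, h2⟩; simp at h2; omega
  · rintro C ⟨s, t, hs, ht, hst, hC⟩
    simp only [toR, Prod.smul_mk, smul_eq_mul, Prod.mk_add_mk, Prod.mk.injEq] at hC
    obtain ⟨hC1, hC2⟩ := hC
    have e1 : (C.1 : ℝ) = x := by rw [← hC1]; linear_combination (x:ℝ) * hst
    have hc1 : C.1 = x := by exact_mod_cast e1
    have e2 : ((C.2 - a : ℤ) : ℝ) * ((C.2 - b : ℤ) : ℝ) = s * t * (-(((b:ℝ) - a)^2)) := by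
      push_cast
      have hs' : s = 1 - t := by linarith
      rw [← hC2, hs']; ring
    have e3 : ((C.2 - a) * (C.2 - b) : ℤ) ≤ 0 := by
      have : ((C.2 - a : ℤ) : ℝ) * ((C.2 - b : ℤ) : ℝ) ≤ 0 := by
        rw [e2]; nlinarith [mul_nonneg hs ht, sq_nonneg ((b:ℝ) - a)]
      exact_mod_cast (by push_cast at this ⊢; linarith : (((C.2 - a) * (C.2 - b) : ℤ) : ℝ) ≤ 0)
    have : C.2 = a ∨ C.2 = b := by
      rcases h with h|h <;> subst h
      · have h5 : 0 ≤ C.2 - a ∧ C.2 - a ≤ 1 := by constructor <;> nlinarith [e3]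
        omega
      · have h5 : -1 ≤ C.2 - a ∧ C.2 - a ≤ 0 := by constructor <;> nlinarith [e3]
        omega
    rcases this with h|h
    · left; exact Prod.ext_iff.mpr ⟨hc1, h⟩
    · right; exact Prod.ext_iff.mpr ⟨hc1, h⟩

lemma one_le_sq (a : ℤ) (ha : a ≠ 0) : 1 ≤ a ^ 2 := by
  rcases (by omega : 1 ≤ a ∨ a ≤ -1) with h|h <;> nlinarith

lemma fseg_self (A B : ℤ × ℤ) (h : A ≠ B) : fseg A B A = true := by
  have hd : Det A B A = 0 := by simp [Det]
  rw [fseg, if_pos hd]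
  simp only [sub_self, decide_eq_true_eq]
  have h2 : A.1 - B.1 ≠ 0 ∨ A.2 - B.2 ≠ 0 := by
    by_contra hh
    push_neg at hh
    exact h (Prod.ext_iff.mpr ⟨by omega, by omega⟩)
  rcases h2 with h2|h2 <;>
    nlinarith [one_le_sq _ h2, sq_nonneg (A.1 - B.1), sq_nonneg (A.2 - B.2)]

lemma fXY (x2 : ℤ) (P : ℤ × ℤ) (hP : 0 ≤ P.1) :
    fseg ((0:ℤ), x2) ((0:ℤ), x2 - 1) P = true ↔ (0 < P.1 ∨ (P.1 = 0 ∧ x2 ≤ P.2)) := by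
  have hd : Det ((0:ℤ), x2) ((0:ℤ), x2 - 1) P = P.1 := by simp [Det]
  rw [fseg, hd]
  rcases em (P.1 = 0) with h0|h0
  · rw [if_pos h0]
    simp only [decide_eq_true_eq]
    constructor
    · intro hh
      have h5 : 0 < 2 * (P.2 - x2) + 1 := by nlinarith [hh]
      right
      exact ⟨h0, by omega⟩
    · rintro (hh|⟨-, hh⟩)
      · omega
      · nlinarith
  · rw [if_neg h0]
    simp only [decide_eq_true_eq]
    omega

lemma fXZ (x2 : ℤ) (P : ℤ × ℤ) (hP : 0 ≤ P.1) :
    fseg ((0:ℤ), x2) ((0:ℤ), x2 + 1) P = true ↔ (P.1 = 0 ∧ P.2 ≤ x2) := by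
  have hd : Det ((0:ℤ), x2) ((0:ℤ), x2 + 1) P = -P.1 := by simp [Det]
  rw [fseg, hd]
  rcases em (P.1 = 0) with h0|h0
  · rw [if_pos (by omega)]
    simp only [decide_eq_true_eq]
    constructor
    · intro hh
      have h5 : 0 < -2 * (P.2 - x2) + 1 := by nlinarith [hh]
      exact ⟨h0, by omega⟩
    · rintro ⟨-, hh⟩
      nlinarith
  · rw [if_neg (by omega)]
    simp only [decide_eq_true_eq]
    omega

/-- for the function on the grid whose unique true point is
X = (0, x2) with 1 ≤ x2 ≤ n−2, the pair {XY, XZ} with Y = (0, x2−1),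
Z = (0, x2+1) is a proper pair of segments defining f, and it is the unique
proper pair of oriented prime segments in the grid defining f. -/
theorem stmt18 (m n : ℕ) (hm : 2 ≤ m) (hn : 2 ≤ n) (x2 : ℤ)
    (hx1 : 1 ≤ x2) (hx2 : x2 ≤ (n : ℤ) - 2) :
    ProperPair ((0 : ℤ), x2) ((0 : ℤ), x2 - 1) ((0 : ℤ), x2) ((0 : ℤ), x2 + 1) ∧
    (∀ P ∈ Grid m n,
      (decide (P = ((0 : ℤ), x2)) : Bool) =
        (fseg ((0 : ℤ), x2) ((0 : ℤ), x2 - 1) P &&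
          fseg ((0 : ℤ), x2) ((0 : ℤ), x2 + 1) P)) ∧
    (∀ A B C D : ℤ × ℤ, A ∈ Grid m n → B ∈ Grid m n → C ∈ Grid m n →
      D ∈ Grid m n → ProperPair A B C D →
      (∀ P ∈ Grid m n,
        (decide (P = ((0 : ℤ), x2)) : Bool) = (fseg A B P && fseg C D P)) →
      ({(A, B), (C, D)} : Set ((ℤ × ℤ) × (ℤ × ℤ))) =
        {(((0 : ℤ), x2), ((0 : ℤ), x2 - 1)), (((0 : ℤ), x2), ((0 : ℤ), x2 + 1))}) := by
  have hXY : ((0:ℤ), x2) ≠ ((0:ℤ), x2 - 1) := by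
    intro hh; rcases Prod.ext_iff.mp hh with ⟨-, h2⟩; omega
  have hXZ : ((0:ℤ), x2) ≠ ((0:ℤ), x2 + 1) := by
    intro hh; rcases Prod.ext_iff.mp hh with ⟨-, h2⟩; omega
  refine ⟨⟨adj_vert 0 x2 (x2-1) (Or.inr rfl), adj_vert 0 x2 (x2+1) (Or.inl rfl),
      fseg_self _ _ hXZ, (fXZ x2 _ le_rfl).mpr ⟨rfl, by omega⟩,
      fseg_self _ _ hXY, (fXY x2 _ le_rfl).mpr (Or.inr ⟨rfl, by omega⟩)⟩, ?_, ?_⟩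
  · intro P hP
    obtain ⟨h1, h2, h3, h4⟩ := hP
    rw [Bool.eq_iff_iff]
    simp only [Bool.and_eq_true, decide_eq_true_eq, fXY x2 P h1, fXZ x2 P h1, Prod.ext_iff]
    omega
  · intro A B C D hA hB hC hD hPP hdef
    obtain ⟨hAB, hCD, p1, p2, p3, p4⟩ := hPP
    have hAX : A = ((0:ℤ), x2) := by
      have h := hdef A hA
      rw [fseg_self A B hAB.1, p1] at h
      simpa using h.symm
    have hCX : C = ((0:ℤ), x2) := by
      have h := hdef C hC
      rw [p3, fseg_self C D hCD.1] at h
      simpa using h.symm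
    subst hAX; subst hCX
    -- collinearity of B, D with X
    have hdetBD : Det ((0:ℤ), x2) B D = 0 := by
      by_contra h0
      have hneg : Det ((0:ℤ), x2) D B = - Det ((0:ℤ), x2) B D := by simp [Det]; ring
      rw [fseg, if_neg h0, decide_eq_true_eq] at p4
      rw [fseg, if_neg (by omega), decide_eq_true_eq, hneg] at p2
      omega
    obtain ⟨k, hk⟩ := adj_collinear ((0:ℤ), x2) B D hAB hdetBD
    have hk1 : D.1 = k * B.1 := by
      have := congrArg Prod.fst hk; simpa using this
    have hk2 : D.2 = x2 + k * (B.2 - x2) := by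
      have := congrArg Prod.snd hk; simp at this; omega
    have hQ : 1 ≤ B.1 ^ 2 + (B.2 - x2) ^ 2 := by
      have h6 : B.1 ≠ 0 ∨ B.2 - x2 ≠ 0 := by
        by_contra hh; push_neg at hh
        exact hAB.1 (Prod.ext_iff.mpr ⟨by omega, by omega⟩).symm
      rcases h6 with h|h <;>
        nlinarith [one_le_sq _ h, sq_nonneg B.1, sq_nonneg (B.2 - x2)]
    -- distance condition
    rw [fseg, if_pos hdetBD, decide_eq_true_eq] at p4
    have p4' : D.1 ^ 2 + (D.2 - x2) ^ 2 < (D.1 - B.1) ^ 2 + (D.2 - B.2) ^ 2 := by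
      simpa using p4
    have q4 : k ^ 2 * (B.1 ^ 2 + (B.2 - x2) ^ 2)
        < (k - 1) ^ 2 * (B.1 ^ 2 + (B.2 - x2) ^ 2) := by
      have e1 : D.1 ^ 2 + (D.2 - x2) ^ 2 = k ^ 2 * (B.1 ^ 2 + (B.2 - x2) ^ 2) := by
        rw [hk1, hk2]; ring
      have e2 : (D.1 - B.1) ^ 2 + (D.2 - B.2) ^ 2
          = (k - 1) ^ 2 * (B.1 ^ 2 + (B.2 - x2) ^ 2) := by
        rw [hk1, hk2]; ring
      linarith [p4', e1.symm, e2.symm]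
    have hkle : k ≤ 0 := by
      by_contra hh
      push_neg at hh
      have h1 : (0:ℤ) < (2 * k - 1) * (B.1 ^ 2 + (B.2 - x2) ^ 2) :=
        mul_pos (by omega) (by linarith [hQ])
      nlinarith [q4, h1]
    have hkne : k ≠ 0 := by
      intro hh
      apply hCD.1
      rw [hk, hh]; simp
    -- k = -1 via adjacency
    have hD' : D = ((0:ℤ), x2) + (-k) • (((0:ℤ), x2) - B) := by
      rw [hk]
      refine Prod.ext_iff.mpr ⟨?_, ?_⟩ <;> simp <;> ring
    have hvne : ((0:ℤ), x2) - B ≠ 0 := by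
      intro hh
      apply hAB.1
      have := sub_eq_zero.mp hh
      exact this
    have hkone : -k = 1 := adj_smul ((0:ℤ), x2) (((0:ℤ), x2) - B) (-k) hvne (by omega) (hD' ▸ hCD)
    have hkm1 : k = -1 := by omega
    subst hkm1
    -- grid forces B.1 = 0
    have hB1 : B.1 = 0 := by
      have := hD.1
      have := hB.1
      omega
    have hD1 : D.1 = 0 := by omega
    have hD2 : D.2 = 2 * x2 - B.2 := by omega
    -- vertical adjacency forces B.2 = x2 ± 1
    have hB2ne : B.2 ≠ x2 := by
      intro hh
      exact hAB.1 (Prod.ext_iff.mpr ⟨by omega, by omega⟩).symm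
    have hBcase : B.2 = x2 + 1 ∨ B.2 = x2 - 1 := by
      rcases lt_or_gt_of_ne hB2ne with h|h
      · right
        have hB' : B = ((0:ℤ), x2) + (x2 - B.2) • (((0:ℤ), -1)) := by
          refine Prod.ext_iff.mpr ⟨?_, ?_⟩ <;> simp <;> omega
        have := adj_smul ((0:ℤ), x2) ((0:ℤ), -1) (x2 - B.2)
          (by intro hh; rcases Prod.ext_iff.mp hh with ⟨-, h2⟩; simp at h2)
          (by omega) (hB' ▸ hAB)
        omega
      · left
        have hB' : B = ((0:ℤ), x2) + (B.2 - x2) • (((0:ℤ), 1)) := by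
          refine Prod.ext_iff.mpr ⟨?_, ?_⟩ <;> simp <;> omega
        have := adj_smul ((0:ℤ), x2) ((0:ℤ), 1) (B.2 - x2)
          (by intro hh; rcases Prod.ext_iff.mp hh with ⟨-, h2⟩; simp at h2)
          (by omega) (hB' ▸ hAB)
        omega
    rcases hBcase with h|h
    · have hBv : B = ((0:ℤ), x2 + 1) := Prod.ext_iff.mpr ⟨hB1, h⟩
      have hDv : D = ((0:ℤ), x2 - 1) := Prod.ext_iff.mpr ⟨hD1, by omega⟩
      rw [hBv, hDv]
      exact Set.pair_comm _ _
    · have hBv : B = ((0:ℤ), x2 - 1) := Prod.ext_iff.mpr ⟨hB1, h⟩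
      have hDv : D = ((0:ℤ), x2 + 1) := Prod.ext_iff.mpr ⟨hD1, by omega⟩
      rw [hBv, hDv]
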